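/- arXiv:2309.08847 — 2 statements merged into one kernel-verified Lean document; each statement's English description precedes it below -/
import Mathlib

section
/- Triangular transport characterizes conditionals: let X take values in a standard Borel space M and Y in ℝ^m, with joint law P_{XY} and marginals P_X, P_Y. If S(x,y) = (T(x,y), y) is a measurable map pushing the product measure P_X ⊗ P_Y forward to P_{XY}, then for P_Y-almost every y, the map x ↦ T(x, y) pushes P_X forward to the conditional distribution P_{X|Y}(·|y). -/
open MeasureTheory ProbabilityTheory

/-- Triangular transport characterizes conditionals: if the block-triangular
map `S(x,y) = (T(x,y), y)` pushes the independent coupling `P_X ⊗ P_Y` forward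
to the joint law `P_{XY}`, then for `P_Y`-a.e. `y` the map `x ↦ T(x,y)` pushes
`P_X` forward to the regular conditional distribution `P_{X|Y}(·|y)` (given by
the kernel `κ`). -/
theorem triangular_map_pushes_to_conditional
    {M : Type*} [MeasurableSpace M] [StandardBorelSpace M] {m : ℕ}
    (ρ : Measure (M × (Fin m → ℝ))) [IsProbabilityMeasure ρ]
    (PX : Measure M) (PY : Measure (Fin m → ℝ))
    [IsProbabilityMeasure PX] [IsProbabilityMeasure PY]
    (hPX : ρ.map Prod.fst = PX) (hPY : ρ.map Prod.snd = PY)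
    (κ : Kernel (Fin m → ℝ) M) [IsMarkovKernel κ]
    (hκ : ∀ (A : Set M) (B : Set (Fin m → ℝ)), MeasurableSet A → MeasurableSet B →
      ρ (A ×ˢ B) = ∫⁻ y in B, κ y A ∂PY)
    (T : M → (Fin m → ℝ) → M)
    (hS : Measurable (fun p : M × (Fin m → ℝ) => (T p.1 p.2, p.2)))
    (hpush : (PX.prod PY).map (fun p : M × (Fin m → ℝ) => (T p.1 p.2, p.2)) = ρ) :
    ∀ᵐ y ∂PY, PX.map (fun x => T x y) = κ y := by
  haveI : Nonempty M := by
    by_contra h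
    rw [not_nonempty_iff] at h
    have : PX Set.univ = 0 := by simp [Set.univ_eq_empty_iff.2 h]
    simp [measure_univ] at this
  have hT : Measurable (fun p : M × (Fin m → ℝ) => T p.1 p.2) := measurable_fst.comp hS
  have hTy : ∀ y, Measurable fun x => T x y := fun y =>
    hT.comp (measurable_id.prodMk measurable_const)
  -- the candidate kernel
  set η : Kernel (Fin m → ℝ) M :=
    { toFun := fun y => PX.map (fun x => T x y)
      measurable' := by
        refine Measure.measurable_of_measurable_coe _ fun A hA => ?_
        have h1 : ∀ y, PX.map (fun x => T x y) A
            = PX ((fun x => (x, y)) ⁻¹' {p : M × (Fin m → ℝ) | T p.1 p.2 ∈ A}) := by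
          intro y
          rw [Measure.map_apply (hTy y) hA]; rfl
        simp_rw [h1]
        exact measurable_measure_prodMk_right (hT hA) } with hη
  have hηapp : ∀ y, η y = PX.map (fun x => T x y) := fun y => rfl
  haveI : IsMarkovKernel η := by
    refine ⟨fun y => ?_⟩
    rw [hηapp]
    exact Measure.isProbabilityMeasure_map (hTy y).aemeasurable
  -- swapped joint measure
  set ρ' : Measure ((Fin m → ℝ) × M) := ρ.map Prod.swap with hρ'
  haveI : IsProbabilityMeasure ρ' := Measure.isProbabilityMeasure_map measurable_swap.aemeasurable
  have hfst : ρ'.fst = PY := by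
    rw [hρ', Measure.fst_map_swap, Measure.snd, hPY]
  have hrect : ∀ (B : Set (Fin m → ℝ)) (A : Set M), MeasurableSet B → MeasurableSet A →
      ρ' (B ×ˢ A) = ρ (A ×ˢ B) := by
    intro B A hB hA
    rw [hρ', Measure.map_apply measurable_swap (hB.prod hA)]
    congr 1
    ext p
    simp [Set.mem_prod, and_comm]
  -- ρ' = PY ⊗ₘ κ
  have h1 : ρ' = PY.compProd κ := by
    refine MeasureTheory.ext_of_generate_finite _ generateFrom_prod.symm isPiSystem_prod
      (fun s hs => ?_) (by simp [measure_univ])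
    obtain ⟨B, hB, A, hA, rfl⟩ := hs
    replace hB : MeasurableSet B := hB
    replace hA : MeasurableSet A := hA
    rw [hrect B A hB hA, hκ A B hA hB, Measure.compProd_apply_prod hB hA]
  -- ρ' = PY ⊗ₘ η
  have h2 : ρ' = PY.compProd η := by
    refine MeasureTheory.ext_of_generate_finite _ generateFrom_prod.symm isPiSystem_prod
      (fun s hs => ?_) (by simp [measure_univ])
    obtain ⟨B, hB, A, hA, rfl⟩ := hs
    replace hB : MeasurableSet B := hB
    replace hA : MeasurableSet A := hA
    rw [hrect B A hB hA, Measure.compProd_apply_prod hB hA]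
    rw [← hpush, Measure.map_apply hS (hA.prod hB)]
    have hpre : (fun p : M × (Fin m → ℝ) => (T p.1 p.2, p.2)) ⁻¹' (A ×ˢ B)
        = {p : M × (Fin m → ℝ) | T p.1 p.2 ∈ A ∧ p.2 ∈ B} := rfl
    rw [hpre, Measure.prod_apply_symm (by exact (hT hA).inter (measurable_snd hB))]
    rw [← lintegral_indicator hB]
    congr 1
    ext y
    by_cases hy : y ∈ B
    · rw [Set.indicator_of_mem hy, hηapp, Measure.map_apply (hTy y) hA]
      congr 1
      ext x
      simp [hy]
    · rw [Set.indicator_of_notMem hy]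
      have : ((fun x => (x, y)) ⁻¹' {p : M × (Fin m → ℝ) | T p.1 p.2 ∈ A ∧ p.2 ∈ B}) = ∅ := by
        ext x; simp [hy]
      simp [this]
  have hκ' := ProbabilityTheory.eq_condKernel_of_measure_eq_compProd κ (hfst ▸ h1)
  have hη' := ProbabilityTheory.eq_condKernel_of_measure_eq_compProd η (hfst ▸ h2)
  rw [hfst] at hκ' hη'
  filter_upwards [hκ', hη'] with y hy1 hy2
  rw [← hηapp, hy2, hy1]
end

section
/- Conversely, if T : M × ℝ^m → M is measurable and for P_Y-almost every y the map T(·, y) pushes P_X forward to P_{X|Y}(·|y), then the block-triangular map S(x,y) = (T(x,y), y) pushes P_X ⊗ P_Y forward to the joint law P_{XY}. -/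
open MeasureTheory ProbabilityTheory

/-- Converse triangular transport: if for `P_Y`-a.e. `y` the map `T(·,y)`
pushes `P_X` forward to the regular conditional distribution `P_{X|Y}(·|y)`
(given by the kernel `κ`), then the block-triangular map `S(x,y) = (T(x,y), y)`
pushes the product measure `P_X ⊗ P_Y` forward to the joint law `P_{XY}`. -/
theorem conditional_pushforward_implies_triangular
    {M : Type*} [MeasurableSpace M] [StandardBorelSpace M] {m : ℕ}
    (ρ : Measure (M × (Fin m → ℝ))) [IsProbabilityMeasure ρ]
    (PX : Measure M) (PY : Measure (Fin m → ℝ))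
    [IsProbabilityMeasure PX] [IsProbabilityMeasure PY]
    (hPX : ρ.map Prod.fst = PX) (hPY : ρ.map Prod.snd = PY)
    (κ : Kernel (Fin m → ℝ) M) [IsMarkovKernel κ]
    (hκ : ∀ (A : Set M) (B : Set (Fin m → ℝ)), MeasurableSet A → MeasurableSet B →
      ρ (A ×ˢ B) = ∫⁻ y in B, κ y A ∂PY)
    (T : M → (Fin m → ℝ) → M)
    (hS : Measurable (fun p : M × (Fin m → ℝ) => (T p.1 p.2, p.2)))
    (hpush : ∀ᵐ y ∂PY, PX.map (fun x => T x y) = κ y) :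
    (PX.prod PY).map (fun p : M × (Fin m → ℝ) => (T p.1 p.2, p.2)) = ρ := by
  have hT : ∀ y, Measurable fun x => T x y := fun y =>
    (measurable_fst.comp hS).comp (measurable_id.prodMk measurable_const)
  haveI : IsProbabilityMeasure
      ((PX.prod PY).map (fun p : M × (Fin m → ℝ) => (T p.1 p.2, p.2))) :=
    Measure.isProbabilityMeasure_map hS.aemeasurable
  refine ext_of_generate_finite _ generateFrom_prod.symm isPiSystem_prod ?_ ?_
  · rintro s ⟨A, hA, B, hB, rfl⟩
    simp only [Set.mem_setOf_eq] at hA hB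
    rw [Measure.map_apply hS (hA.prod hB), hκ A B hA hB,
      Measure.prod_apply_symm (hS (hA.prod hB))]
    calc ∫⁻ y, PX ((fun x => (x, y)) ⁻¹'
            ((fun p : M × (Fin m → ℝ) => (T p.1 p.2, p.2)) ⁻¹' (A ×ˢ B))) ∂PY
        = ∫⁻ y, B.indicator (fun y => PX ((fun x => T x y) ⁻¹' A)) y ∂PY := by
          refine lintegral_congr fun y => ?_
          by_cases hy : y ∈ B
          · rw [Set.indicator_of_mem hy]
            congr 1
            ext x
            simp [Set.mem_prod, hy]
          · rw [Set.indicator_of_notMem hy]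
            convert measure_empty (μ := PX)
            ext x
            simp [Set.mem_prod, hy]
      _ = ∫⁻ y in B, PX ((fun x => T x y) ⁻¹' A) ∂PY := by
          rw [lintegral_indicator hB]
      _ = ∫⁻ y in B, κ y A ∂PY := by
          refine lintegral_congr_ae (ae_restrict_of_ae ?_)
          filter_upwards [hpush] with y hy
          rw [← hy, Measure.map_apply (hT y) hA]
  · simp
end
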